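/- In H_1(Σ_n^d; ℤ), the classes [a_i^k] for i = 1,…,d satisfy the relation ∑_{i=1}^d [a_i^k] = 0 for each k, and the classes [a_i^k] for k = 1,…,n-1 and i = 1,…,d-1 form a ℤ-basis of H_1(Σ_n^d; ℤ) ≅ ℤ^{(n-1)(d-1)}. -/

import Mathlib

open Finset

/-- candidate basis vectors -/
noncomputable def stmt7av (n d : ℕ) (p : Fin n × Fin (d-1)) : (Fin n × Fin d) →₀ ℤ :=
  Finsupp.single (p.1, ⟨p.2.val, by have := p.2.isLt; omega⟩) 1
  - Finsupp.single (p.1, ⟨p.2.val + 1, by have := p.2.isLt; omega⟩) 1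

noncomputable def stmt7E (n d : ℕ) : ((Fin n × Fin (d-1)) →₀ ℤ) →ₗ[ℤ] ((Fin n × Fin d) →₀ ℤ) :=
  Finsupp.linearCombination ℤ (stmt7av n d)

noncomputable def stmt7C (n d : ℕ) : ((Fin n × Fin d) →₀ ℤ) →ₗ[ℤ] ((Fin n × Fin (d-1)) →₀ ℤ) :=
  (Finsupp.linearEquivFunOnFinite ℤ ℤ _).symm.toLinearMap ∘ₗ
    LinearMap.pi (fun p : Fin n × Fin (d-1) =>
      ∑ j ∈ univ.filter (fun j : Fin d => j.val ≤ p.2.val), Finsupp.lapply (p.1, j))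

lemma stmt7C_apply {n d : ℕ} (f : (Fin n × Fin d) →₀ ℤ) (p : Fin n × Fin (d-1)) :
    stmt7C n d f p = ∑ j ∈ univ.filter (fun j : Fin d => j.val ≤ p.2.val), f (p.1, j) := by
  have h1 : stmt7C n d f p = (LinearMap.pi (fun p : Fin n × Fin (d-1) =>
      ∑ j ∈ univ.filter (fun j : Fin d => j.val ≤ p.2.val), Finsupp.lapply (p.1, j))) f p := rfl
  rw [h1, LinearMap.pi_apply, LinearMap.sum_apply]
  simp [Finsupp.lapply_apply]

lemma stmt7_bdry_eq {n d : ℕ} (bdry : ((Fin n × Fin d) →₀ ℤ) →ₗ[ℤ] (Fin (n + 1) →₀ ℤ))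
    (hbdry : ∀ e : Fin n × Fin d,
      bdry (Finsupp.single e 1) = Finsupp.single e.1.succ 1 - Finsupp.single e.1.castSucc 1)
    (f : (Fin n × Fin d) →₀ ℤ) :
    bdry f = ∑ k : Fin n, (∑ i : Fin d, f (k,i)) •
      (Finsupp.single k.succ 1 - Finsupp.single k.castSucc (1:ℤ)) := by
  have hf : f = ∑ e : Fin n × Fin d, Finsupp.single e (f e) := by
    ext e
    rw [Finsupp.finset_sum_apply]
    simp [Finsupp.single_apply]
  calc bdry f = bdry (∑ e : Fin n × Fin d, Finsupp.single e (f e)) := by rw [← hf]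
    _ = ∑ e : Fin n × Fin d, f e • (Finsupp.single e.1.succ 1 - Finsupp.single e.1.castSucc (1:ℤ)) := by
        rw [map_sum]
        refine Finset.sum_congr rfl fun e _ => ?_
        rw [show Finsupp.single e (f e) = f e • Finsupp.single e (1:ℤ) by simp, map_smul, hbdry]
    _ = _ := by
        rw [Fintype.sum_prod_type]
        refine Finset.sum_congr rfl fun k _ => ?_
        show ∑ y : Fin d, f (k, y) • ((Finsupp.single k.succ 1) - Finsupp.single k.castSucc (1:ℤ)) = _
        exact (Finset.sum_smul).symm

lemma stmt7_mem_ker_iff {n d : ℕ} (bdry : ((Fin n × Fin d) →₀ ℤ) →ₗ[ℤ] (Fin (n + 1) →₀ ℤ))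
    (hbdry : ∀ e : Fin n × Fin d,
      bdry (Finsupp.single e 1) = Finsupp.single e.1.succ 1 - Finsupp.single e.1.castSucc 1)
    (f : (Fin n × Fin d) →₀ ℤ) :
    f ∈ LinearMap.ker bdry ↔ ∀ k : Fin n, ∑ i : Fin d, f (k,i) = 0 := by
  rw [LinearMap.mem_ker, stmt7_bdry_eq bdry hbdry]
  set T : Fin n → ℤ := fun k => ∑ i : Fin d, f (k,i) with hT
  constructor
  · intro h
    have hv : ∀ v : Fin (n+1), ∑ k : Fin n,
        T k * ((if (k.val+1 : ℕ) = v.val then (1:ℤ) else 0) - (if (k.val : ℕ) = v.val then 1 else 0)) = 0 := by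
      intro v
      have h2 := congrArg (fun g : Fin (n+1) →₀ ℤ => g v) h
      simpa [Finsupp.finset_sum_apply, Finsupp.single_apply, Fin.ext_iff, mul_sub] using h2
    have key : ∀ j, ∀ hj : j < n, T ⟨j, hj⟩ = 0 := by
      intro j
      induction j with
      | zero =>
        intro hj
        have h0 := hv ⟨0, by omega⟩
        rw [Finset.sum_eq_single (⟨0, hj⟩ : Fin n)] at h0
        · have := h0
          simp at this
          linarith
        · intro k _ hk
          have hne : k.val ≠ 0 := fun hc => hk (Fin.ext hc)
          have hne' : ¬ ((k.val+1 : ℕ) = 0) := by omega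
          simp [hne, hne']
        · simp
      | succ t ih =>
        intro hj
        have h0 := hv ⟨t+1, by omega⟩
        have hsplit : ∀ k : Fin n,
            T k * ((if (k.val+1 : ℕ) = t+1 then (1:ℤ) else 0) - (if (k.val : ℕ) = t+1 then 1 else 0))
            = (if k = (⟨t, by omega⟩ : Fin n) then T k else 0)
              - (if k = (⟨t+1, hj⟩ : Fin n) then T k else 0) := by
          intro k
          simp only [Fin.ext_iff]
          split_ifs <;> (try omega) <;> ring
        rw [Finset.sum_congr rfl (fun k _ => hsplit k), Finset.sum_sub_distrib,
          Finset.sum_ite_eq' , Finset.sum_ite_eq'] at h0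
        simp only [Finset.mem_univ, if_true] at h0
        have ht := ih (by omega)
        rw [ht] at h0
        linarith
    intro k
    have := key k.val k.isLt
    simpa using this
  · intro h
    refine Finset.sum_eq_zero fun k _ => ?_
    rw [h k, zero_smul]

lemma stmt7_fin_sum_ite {m t : ℕ} (g : Fin m → ℤ) :
    ∑ i : Fin m, (if (i : ℕ) = t then g i else 0) = if h : t < m then g ⟨t, h⟩ else 0 := by
  split
  · next h =>
    rw [Finset.sum_eq_single (⟨t, h⟩ : Fin m)]
    · simp
    · intro k _ hk
      have : k.val ≠ t := fun hc => hk (Fin.ext hc)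
      simp [this]
    · simp
  · next h =>
    refine Finset.sum_eq_zero fun i _ => ?_
    have : (i : ℕ) ≠ t := by have := i.isLt; omega
    simp [this]

lemma stmt7_sum_filter_single {n d : ℕ} (k q1 : Fin n) (e : Fin d) (t : ℕ) :
    ∑ j ∈ univ.filter (fun j : Fin d => j.val ≤ t), (Finsupp.single (k,e) (1:ℤ)) (q1, j)
    = if k = q1 ∧ e.val ≤ t then 1 else 0 := by
  rw [Finset.sum_filter]
  have hstep : ∀ j : Fin d, (if (j:ℕ) ≤ t then (Finsupp.single (k,e) (1:ℤ)) (q1, j) else 0)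
      = if (j:ℕ) = e.val then (if k = q1 ∧ e.val ≤ t then (1:ℤ) else 0) else 0 := by
    intro j
    simp only [Finsupp.single_apply, Prod.mk.injEq, Prod.ext_iff, Fin.ext_iff, ite_and]
    split_ifs <;> first | rfl | omega
  rw [Finset.sum_congr rfl (fun j _ => hstep j), stmt7_fin_sum_ite]
  simp [e.isLt]

lemma stmt7_C_av {n d : ℕ} (p : Fin n × Fin (d-1)) :
    stmt7C n d (stmt7av n d p) = Finsupp.single p 1 := by
  ext q
  rw [stmt7C_apply]
  simp only [stmt7av, Finsupp.sub_apply]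
  rw [Finset.sum_sub_distrib, stmt7_sum_filter_single, stmt7_sum_filter_single]
  have hq2 := q.2.isLt
  have hp2 := p.2.isLt
  simp only [Finsupp.single_apply, Prod.ext_iff, Fin.ext_iff, ite_and]
  by_cases hk : p.1 = q.1 <;> simp [hk] <;> split_ifs <;> omega

set_option maxHeartbeats 1000000 in
lemma stmt7_E_C {n d : ℕ} (f : (Fin n × Fin d) →₀ ℤ)
    (hf : ∀ k : Fin n, ∑ i : Fin d, f (k,i) = 0) :
    stmt7E n d (stmt7C n d f) = f := by
  ext e
  obtain ⟨k, i⟩ := e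
  set S : ℕ → ℤ := fun t => ∑ j ∈ univ.filter (fun j : Fin d => j.val ≤ t), f (k, j) with hSdef
  -- basic facts about S
  have S0 : ∀ j : Fin d, j.val = 0 → S 0 = f (k, j) := by
    intro j0 hj0
    rw [hSdef]
    simp only [Finset.sum_filter, Nat.le_zero]
    rw [stmt7_fin_sum_ite (fun j => f (k, j))]
    rw [dif_pos (by have := j0.isLt; omega : 0 < d)]
    exact congrArg (fun j => f (k, j)) (Fin.ext hj0.symm)
  have Sstep : ∀ (t : ℕ) (j : Fin d), j.val = t + 1 → S (t+1) = S t + f (k, j) := by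
    intro t j0 hj0
    have ht : t + 1 < d := hj0 ▸ j0.isLt
    have hsplit : ∀ j : Fin d, (if (j:ℕ) ≤ t + 1 then f (k, j) else 0)
        = (if (j:ℕ) ≤ t then f (k, j) else 0) + (if (j:ℕ) = t + 1 then f (k, j) else 0) := by
      intro j
      split_ifs <;> first | omega | simp
    rw [hSdef]
    simp only [Finset.sum_filter]
    rw [Finset.sum_congr rfl (fun j _ => hsplit j), Finset.sum_add_distrib,
      stmt7_fin_sum_ite (fun j => f (k, j))]
    rw [dif_pos ht]
    have : f (k, (⟨t+1, ht⟩ : Fin d)) = f (k, j0) := congrArg (fun j => f (k, j)) (Fin.ext hj0.symm)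
    rw [this]
  have Sfull : S (d - 1) = 0 := by
    rw [hSdef, ← hf k]
    simp only [Finset.sum_filter]
    refine Finset.sum_congr rfl fun j _ => ?_
    have hj : (j:ℕ) ≤ d - 1 := Nat.le_sub_one_of_lt j.isLt
    simp [hj]
  -- compute LHS
  have hL : stmt7E n d (stmt7C n d f) = ∑ p : Fin n × Fin (d-1), (stmt7C n d f p) • stmt7av n d p := by
    rw [stmt7E, Finsupp.linearCombination_apply, Finsupp.sum_fintype]
    intro p; simp
  rw [hL, Finsupp.finset_sum_apply]
  simp only [Finsupp.smul_apply, smul_eq_mul]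
  rw [Fintype.sum_prod_type, Finset.sum_eq_single k]
  rotate_left
  · intro k' _ hk'
    refine Finset.sum_eq_zero fun i' _ => ?_
    have hz : stmt7av n d (k', i') (k, i) = 0 := by
      simp only [stmt7av, Finsupp.sub_apply, Finsupp.single_apply, Prod.ext_iff]
      simp [hk']
    rw [hz, mul_zero]
  · simp
  -- now the single-row sum
  have hterm : ∀ i' : Fin (d-1), stmt7C n d f (k, i') * stmt7av n d (k, i') (k, i)
      = (if (i':ℕ) = i.val then S i'.val else 0) - (if (i':ℕ) + 1 = i.val then S i'.val else 0) := by
    intro i'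
    rw [stmt7C_apply]
    simp only [stmt7av, Finsupp.sub_apply, Finsupp.single_apply, Prod.ext_iff, Fin.ext_iff]
    show S i'.val * _ = _
    simp only [true_and]
    split_ifs <;> first | omega | ring
  rw [Finset.sum_congr rfl (fun i' _ => hterm i'), Finset.sum_sub_distrib,
    stmt7_fin_sum_ite (fun i' => S i'.val)]
  have hsecond : ∑ i' : Fin (d-1), (if (i':ℕ) + 1 = i.val then S i'.val else 0)
      = if h : i.val - 1 < d - 1 ∧ 1 ≤ i.val then S (i.val - 1) else 0 := by
    have hstep : ∀ i' : Fin (d-1), (if (i':ℕ) + 1 = i.val then S i'.val else 0)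
        = if (i':ℕ) = i.val - 1 then (if 1 ≤ i.val then S i'.val else 0) else 0 := by
      intro i'
      by_cases hc : (i':ℕ) + 1 = i.val
      · rw [if_pos hc, if_pos (by omega), if_pos (by omega)]
      · rw [if_neg hc]
        by_cases hc2 : (i':ℕ) = i.val - 1
        · rw [if_pos hc2, if_neg (by omega)]
        · rw [if_neg hc2]
    rw [Finset.sum_congr rfl (fun i' _ => hstep i'),
      stmt7_fin_sum_ite (fun i' => if 1 ≤ i.val then S i'.val else 0)]
    by_cases h1 : i.val - 1 < d - 1
    · by_cases h2 : 1 ≤ i.val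
      · rw [dif_pos h1, dif_pos ⟨h1, h2⟩]
        exact if_pos h2
      · rw [dif_pos h1, dif_neg (fun hc => h2 hc.2)]
        exact if_neg h2
    · rw [dif_neg h1, dif_neg (fun hc => h1 hc.1)]
  rw [hsecond]
  have hi := i.isLt
  split_ifs with h1 h2 h3
  · -- 0 < i.val < d-1
    show S i.val - S (i.val - 1) = f (k, i)
    obtain ⟨t, ht⟩ : ∃ t, i.val = t + 1 := ⟨i.val - 1, by omega⟩
    have h3 := Sstep t i ht
    rw [ht, Nat.add_sub_cancel]
    linarith
  · -- i.val = 0, d ≥ 2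
    show S i.val - 0 = f (k, i)
    have h0 : i.val = 0 := by omega
    rw [sub_zero, h0]
    exact S0 i h0
  · -- i.val = d - 1 ≥ 1
    show 0 - S (i.val - 1) = f (k, i)
    obtain ⟨t, ht⟩ : ∃ t, i.val = t + 1 := ⟨i.val - 1, by omega⟩
    have h4 := Sstep t i ht
    have h5 : S (t+1) = 0 := by
      have he : t + 1 = d - 1 := by omega
      rw [he]; exact Sfull
    rw [ht, Nat.add_sub_cancel]
    linarith
  · -- d = 1
    show 0 - 0 = f (k, i)
    have h0 : i.val = 0 := by omega
    have h6 := S0 i h0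
    have h7 : S 0 = 0 := by
      have he : (0:ℕ) = d - 1 := by omega
      rw [he]; exact Sfull
    linarith

/-- `H_1(Σ_n^d; ℤ)` via the graph model: the graph has vertices `Fin (n+1)` and,
for each `k : Fin n`, `d` parallel edges `γ_i^k` from vertex `k` to vertex `k+1`.
With boundary map `bdry(γ_i^k) = x_{k+1} - x_k` and cycles
`a_i^k = γ_i^k - γ_{i+1}^k` (index `i+1` mod `d`), each `a_i^k` is a cycle,
`∑_{i=1}^d a_i^k = 0`, and the `a_i^k` for `i = 1, …, d-1` form a ℤ-basis of the
cycle module `ker bdry ≅ H_1(Σ_n^d; ℤ) ≅ ℤ^{n(d-1)}`. -/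
theorem stmt7 (n d : ℕ) [NeZero d]
    (bdry : ((Fin n × Fin d) →₀ ℤ) →ₗ[ℤ] (Fin (n + 1) →₀ ℤ))
    (hbdry : ∀ e : Fin n × Fin d,
      bdry (Finsupp.single e 1) = Finsupp.single e.1.succ 1 - Finsupp.single e.1.castSucc 1)
    (a : Fin n → Fin d → ((Fin n × Fin d) →₀ ℤ))
    (ha : ∀ k i, a k i = Finsupp.single (k, i) 1 - Finsupp.single (k, i + 1) 1) :
    (∀ k i, a k i ∈ LinearMap.ker bdry) ∧
    (∀ k, ∑ i : Fin d, a k i = 0) ∧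
    ∃ b : Module.Basis (Fin n × Fin (d - 1)) ℤ (LinearMap.ker bdry),
      ∀ (k : Fin n) (i : Fin (d - 1)),
        (b (k, i) : (Fin n × Fin d) →₀ ℤ) = a k (Fin.castLE (Nat.sub_le d 1) i) := by
  have hker : ∀ k i, a k i ∈ LinearMap.ker bdry := by
    intro k i
    rw [LinearMap.mem_ker, ha, map_sub, hbdry (k, i), hbdry (k, i+1)]
    exact sub_self _
  refine ⟨hker, ?_, ?_⟩
  · intro k
    simp only [ha]
    rw [Finset.sum_sub_distrib, sub_eq_zero]
    exact (Fintype.sum_equiv (Equiv.addRight (1 : Fin d))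
      (fun i => Finsupp.single (k, i + 1) 1) (fun j => Finsupp.single (k, j) 1)
      (fun i => rfl)).symm
  · have havk : ∀ p, stmt7av n d p ∈ LinearMap.ker bdry := by
      intro p
      rw [LinearMap.mem_ker, stmt7av, map_sub, hbdry, hbdry]
      exact sub_self _
    have hEk : ∀ g, stmt7E n d g ∈ LinearMap.ker bdry := by
      intro g
      rw [stmt7E, Finsupp.linearCombination_apply]
      exact Submodule.sum_mem _ fun p _ => Submodule.smul_mem _ _ (havk p)
    let E' : ((Fin n × Fin (d-1)) →₀ ℤ) →ₗ[ℤ] LinearMap.ker bdry :=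
      (stmt7E n d).codRestrict _ hEk
    let C' : (LinearMap.ker bdry : Submodule ℤ _) →ₗ[ℤ] ((Fin n × Fin (d-1)) →₀ ℤ) :=
      (stmt7C n d) ∘ₗ (LinearMap.ker bdry).subtype
    have h1 : C'.comp E' = LinearMap.id := by
      refine Finsupp.lhom_ext fun p c => ?_
      show stmt7C n d (stmt7E n d (Finsupp.single p c)) = Finsupp.single p c
      rw [stmt7E, Finsupp.linearCombination_single, map_smul]
      show c • stmt7C n d (stmt7av n d p) = _
      rw [stmt7_C_av, Finsupp.smul_single]
      simp
    have h2 : E'.comp C' = LinearMap.id := by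
      refine LinearMap.ext fun x => Subtype.ext ?_
      show stmt7E n d (stmt7C n d x.1) = x.1
      exact stmt7_E_C x.1 (fun k => ((stmt7_mem_ker_iff bdry hbdry x.1).1 x.2) k)
    let b : Module.Basis (Fin n × Fin (d-1)) ℤ (LinearMap.ker bdry) :=
      Module.Basis.ofRepr (LinearEquiv.ofLinear C' E' h1 h2)
    refine ⟨b, fun k i => ?_⟩
    have hb : b (k, i) = (LinearEquiv.ofLinear C' E' h1 h2).symm (Finsupp.single (k,i) 1) := rfl
    rw [hb, LinearEquiv.ofLinear_symm_apply]
    show stmt7E n d (Finsupp.single (k,i) 1) = a k (Fin.castLE (Nat.sub_le d 1) i)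
    rw [stmt7E, Finsupp.linearCombination_single, one_smul, ha, stmt7av]
    have hd2 : 2 ≤ d := by have := i.isLt; omega
    have he1 : (Fin.castLE (Nat.sub_le d 1) i) = (⟨i.val, by have := i.isLt; omega⟩ : Fin d) := rfl
    have hi := i.isLt
    have he2 : (Fin.castLE (Nat.sub_le d 1) i) + 1 = (⟨i.val + 1, by omega⟩ : Fin d) := by
      apply Fin.ext
      rw [Fin.add_def]
      have h1v : ((1 : Fin d) : ℕ) = 1 := by
        rw [Fin.val_one', Nat.mod_eq_of_lt (by omega)]
      rw [h1v]
      show (i.val + 1) % d = i.val + 1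
      exact Nat.mod_eq_of_lt (by omega)
    rw [← he2, ← he1]
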